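/- Let H be a real Hilbert space, 0 ≤ a₀ < a ≤ b, and let f_n, f : [a₀,b] → H be continuous. Assume: (i) for every h ∈ H, the real functions t ↦ ⟨f_n(t), h⟩ converge uniformly on [a₀,b] to t ↦ ⟨f(t), h⟩; (ii) f_n(t) → f(t) strongly in H for almost every t ∈ [a₀,b]; (iii) there exist continuous nondecreasing functions g_n : [a₀,b] → ℝ and a continuous function g : [a₀,b] → ℝ with g_n(t) → g(t) for every t ∈ [a₀,b], such that for each n the function t ↦ ‖f_n(t)‖² − g_n(t) is nonincreasing on [a₀,b]. Then f_n → f uniformly on [a,b], i.e. sup_{t∈[a,b]} ‖f_n(t) − f(t)‖ → 0 as n → ∞. -/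

import Mathlib

open MeasureTheory Filter

/-- Compactness helper: if every point of a compact set has a neighborhood on which
an eventual (in `n`) statement holds, then the statement holds eventually uniformly. -/
lemma aux_compact_eventually {s : Set ℝ} (hs : IsCompact s) {p : ℕ → ℝ → Prop}
    (h : ∀ t ∈ s, ∃ V ∈ nhds t, ∀ᶠ n in atTop, ∀ u ∈ V ∩ s, p n u) :
    ∀ᶠ n in atTop, ∀ u ∈ s, p n u := by
  choose! V hV hVp using h
  obtain ⟨T, hTs, hTcov⟩ := hs.elim_nhds_subcover V (fun t ht => hV t ht)
  have hall : ∀ᶠ n in atTop, ∀ t ∈ T, ∀ u ∈ V t ∩ s, p n u :=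
    (eventually_all_finset T).2 fun t ht => hVp t (hTs t ht)
  refine hall.mono fun n hn u hu => ?_
  obtain ⟨t, htT, hut⟩ := Set.mem_iUnion₂.1 (hTcov hu)
  exact hn t htT u ⟨hut, hu⟩

/-- Strong-convergence upgrade in a Hilbert space: uniform weak convergence on `[a₀,b]`,
a.e. strong convergence, and an energy-monotonicity structure (`‖fₙ(t)‖² − gₙ(t)`
nonincreasing with `gₙ → g` pointwise, `gₙ` nondecreasing continuous) imply uniform strong
convergence on every subinterval `[a,b]` with `a₀ < a`. -/
theorem uniform_strong_convergence_of_energy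
    {H : Type*} [NormedAddCommGroup H] [InnerProductSpace ℝ H] [CompleteSpace H]
    (a₀ a b : ℝ) (ha₀ : 0 ≤ a₀) (ha : a₀ < a) (hab : a ≤ b)
    (fn : ℕ → ℝ → H) (f : ℝ → H)
    (hfnCont : ∀ n, ContinuousOn (fn n) (Set.Icc a₀ b))
    (hfCont : ContinuousOn f (Set.Icc a₀ b))
    (hweak : ∀ h : H, TendstoUniformlyOn
      (fun n t => (inner ℝ (fn n t) h : ℝ)) (fun t => (inner ℝ (f t) h : ℝ))
      atTop (Set.Icc a₀ b))
    (hae : ∀ᵐ t : ℝ, t ∈ Set.Icc a₀ b → Tendsto (fun n => fn n t) atTop (nhds (f t)))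
    (henergy : ∃ (gn : ℕ → ℝ → ℝ) (g : ℝ → ℝ),
      (∀ n, ContinuousOn (gn n) (Set.Icc a₀ b)) ∧
      (∀ n, MonotoneOn (gn n) (Set.Icc a₀ b)) ∧
      ContinuousOn g (Set.Icc a₀ b) ∧
      (∀ t ∈ Set.Icc a₀ b, Tendsto (fun n => gn n t) atTop (nhds (g t))) ∧
      (∀ n, AntitoneOn (fun t => ‖fn n t‖ ^ 2 - gn n t) (Set.Icc a₀ b))) :
    TendstoUniformlyOn fn f atTop (Set.Icc a b) := by
  obtain ⟨gn, g, hgnCont, hgnMono, hgCont, hgnTend, hphiAnti⟩ := henergy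
  have hIccsub : Set.Icc a b ⊆ Set.Icc a₀ b := Set.Icc_subset_Icc ha.le le_rfl
  have ha₀b : a₀ ≤ b := le_trans ha.le hab
  have hcomp : IsCompact (Set.Icc a₀ b) := isCompact_Icc
  have hcompab : IsCompact (Set.Icc a b) := isCompact_Icc
  -- density of the a.e. strong-convergence set
  have hdense : ∀ x y : ℝ, x < y → Set.Ioo x y ⊆ Set.Icc a₀ b →
      ∃ s ∈ Set.Ioo x y, Tendsto (fun n => fn n s) atTop (nhds (f s)) := by
    intro x y hxy hsub
    by_contra hcon
    push_neg at hcon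
    have hsub2 : Set.Ioo x y ⊆
        {t : ℝ | ¬ (t ∈ Set.Icc a₀ b → Tendsto (fun n => fn n t) atTop (nhds (f t)))} := by
      intro s hs
      simp only [Set.mem_setOf_eq, Classical.not_imp]
      exact ⟨hsub hs, hcon s hs⟩
    have h0 : volume (Set.Ioo x y) = 0 :=
      measure_mono_null hsub2 (ae_iff.1 hae)
    rw [Real.volume_Ioo] at h0
    simp only [ENNReal.ofReal_eq_zero] at h0
    linarith
  -- uniform continuity moduli
  have hψCont : ContinuousOn (fun t => ‖f t‖ ^ 2) (Set.Icc a₀ b) := hfCont.norm.pow 2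
  have hucψ := hcomp.uniformContinuousOn_of_continuous hψCont
  have hucg := hcomp.uniformContinuousOn_of_continuous hgCont
  have hucf := hcomp.uniformContinuousOn_of_continuous hfCont
  -- bound on ‖f‖
  obtain ⟨t₀, ht₀, hC'⟩ := hcomp.exists_isMaxOn (Set.nonempty_Icc.2 ha₀b) hfCont.norm
  have hC : ∀ t ∈ Set.Icc a₀ b, ‖f t‖ ≤ ‖f t₀‖ := fun t htm => hC' htm
  set C : ℝ := ‖f t₀‖ with hCdef
  have hC0 : 0 ≤ C := norm_nonneg _
  -- Key step I: eventual uniform upper bound on the energies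
  have keyI : ∀ ε > 0, ∀ᶠ n in atTop, ∀ t ∈ Set.Icc a b,
      ‖fn n t‖ ^ 2 ≤ ‖f t‖ ^ 2 + ε := by
    intro ε hε
    obtain ⟨δ₁, hδ₁, hmodψ⟩ := Metric.uniformContinuousOn_iff.1 hucψ (ε/4) (by positivity)
    obtain ⟨δ₂, hδ₂, hmodg⟩ := Metric.uniformContinuousOn_iff.1 hucg (ε/4) (by positivity)
    set δ := min δ₁ δ₂ with hδdef
    have hδ : 0 < δ := lt_min hδ₁ hδ₂
    apply aux_compact_eventually hcompab
    intro t ht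
    have hta₀ : a₀ < t := lt_of_lt_of_le ha ht.1
    have htb : t ≤ b := ht.2
    -- pick s just to the left of t where strong convergence holds
    obtain ⟨s, hsmem, hsT⟩ := hdense (max a₀ (t - δ/4)) t
      (max_lt hta₀ (by linarith))
      (fun x hx => ⟨le_trans (le_max_left _ _) hx.1.le, le_trans hx.2.le htb⟩)
    have hsIcc : s ∈ Set.Icc a₀ b :=
      ⟨le_trans (le_max_left _ _) hsmem.1.le, le_trans hsmem.2.le htb⟩
    have hs_gt : t - δ/4 < s := lt_of_le_of_lt (le_max_right _ _) hsmem.1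
    set s' : ℝ := min (t + δ/4) b with hs'def
    have hs'Icc : s' ∈ Set.Icc a₀ b :=
      ⟨le_min (by linarith) ha₀b, min_le_right _ _⟩
    refine ⟨Set.Ioo s (t + δ/4), Ioo_mem_nhds hsmem.2 (by linarith), ?_⟩
    -- eventual pointwise facts at s and s'
    have hφs : Tendsto (fun n => ‖fn n s‖ ^ 2 - gn n s) atTop
        (nhds (‖f s‖ ^ 2 - g s)) :=
      ((hsT.norm.pow 2).sub (hgnTend s hsIcc))
    have hφs' := hφs.eventually_lt_const (show ‖f s‖ ^ 2 - g s < ‖f s‖ ^ 2 - g s + ε/4 by linarith)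
    have hgs' := (hgnTend s' hs'Icc).eventually_lt_const
      (show g s' < g s' + ε/4 by linarith)
    filter_upwards [hφs', hgs'] with n h1 h2
    rintro u ⟨huV, huab⟩
    have huIcc : u ∈ Set.Icc a₀ b := hIccsub huab
    have hsu : s ≤ u := huV.1.le
    have hus' : u ≤ s' := le_min huV.2.le huIcc.2
    have hmono1 : ‖fn n u‖ ^ 2 - gn n u ≤ ‖fn n s‖ ^ 2 - gn n s :=
      hphiAnti n hsIcc huIcc hsu
    have hmono2 : gn n u ≤ gn n s' := hgnMono n huIcc hs'Icc hus'
    -- continuity moduli at s vs u and s vs s'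
    have hd1 : dist s u < δ₁ := by
      rw [Real.dist_eq, abs_lt]
      constructor <;>
        [linarith [min_le_left δ₁ δ₂, huV.1, huV.2];
         linarith [min_le_left δ₁ δ₂, huV.1, huV.2]]
    have hd2 : dist s s' < δ₂ := by
      have h1' : s < s' := lt_min (by linarith [hsmem.2]) (lt_of_lt_of_le hsmem.2 htb)
      have h2' : s' ≤ t + δ/4 := min_le_left _ _
      rw [Real.dist_eq, abs_lt]
      constructor <;> [linarith [min_le_right δ₁ δ₂]; linarith [min_le_right δ₁ δ₂]]
    have hψm : ‖f s‖ ^ 2 ≤ ‖f u‖ ^ 2 + ε/4 := by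
      have := hmodψ s hsIcc u huIcc hd1
      rw [Real.dist_eq] at this
      have := abs_lt.1 this
      linarith [this.1, this.2]
    have hgm : g s' ≤ g s + ε/4 := by
      have := hmodg s hsIcc s' hs'Icc hd2
      rw [Real.dist_eq] at this
      have := abs_lt.1 this
      linarith [this.1, this.2]
    have : ‖fn n u‖ ^ 2 ≤ (‖fn n s‖ ^ 2 - gn n s) + gn n s' := by linarith
    calc ‖fn n u‖ ^ 2 ≤ (‖fn n s‖ ^ 2 - gn n s) + gn n s' := this
      _ ≤ (‖f s‖ ^ 2 - g s + ε/4) + (g s' + ε/4) := by linarith [h1, h2]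
      _ ≤ ‖f u‖ ^ 2 + ε := by linarith
  -- Key step II: eventual uniform smallness of the weak pairing
  have keyII : ∀ ε > 0, ∀ᶠ n in atTop, ∀ t ∈ Set.Icc a b,
      (inner ℝ (f t - fn n t) (f t) : ℝ) ≤ ε := by
    intro ε hε
    have hbound : ∀ᶠ n in atTop, ∀ t ∈ Set.Icc a b, ‖fn n t‖ ≤ C + 1 := by
      filter_upwards [keyI 1 one_pos] with n hn t ht
      have h1 : ‖fn n t‖ ^ 2 ≤ C ^ 2 + 1 := by
        have := hn t ht
        have h2 := hC t (hIccsub ht)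
        nlinarith [norm_nonneg (f t)]
      have h3 : ‖fn n t‖ ^ 2 ≤ (C + 1) ^ 2 := by nlinarith
      exact le_of_pow_le_pow_left₀ two_ne_zero (by positivity) h3
    obtain ⟨δ₀, hδ₀, hmodf⟩ := Metric.uniformContinuousOn_iff.1 hucf
      (ε / (2 * (2*C + 2))) (by positivity)
    apply aux_compact_eventually hcompab
    intro t ht
    have htIcc : t ∈ Set.Icc a₀ b := hIccsub ht
    refine ⟨Metric.ball t δ₀, Metric.ball_mem_nhds t hδ₀, ?_⟩
    have hw := (Metric.tendstoUniformlyOn_iff.1 (hweak (f t))) (ε/2) (by positivity)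
    filter_upwards [hbound, hw] with n hbn hwn
    rintro u ⟨huV, huab⟩
    have huIcc : u ∈ Set.Icc a₀ b := hIccsub huab
    have hsplit : (inner ℝ (f u - fn n u) (f u) : ℝ)
        = inner ℝ (f u - fn n u) (f t) + inner ℝ (f u - fn n u) (f u - f t) := by
      rw [← inner_add_right]
      congr 1
      abel
    have hterm1 : (inner ℝ (f u - fn n u) (f t) : ℝ) ≤ ε/2 := by
      have := hwn u huIcc
      rw [Real.dist_eq] at this
      have h' := (abs_lt.1 this).2
      rw [inner_sub_left]
      linarith [h']
    have hterm2 : (inner ℝ (f u - fn n u) (f u - f t) : ℝ) ≤ ε/2 := by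
      have hle : (inner ℝ (f u - fn n u) (f u - f t) : ℝ)
          ≤ ‖f u - fn n u‖ * ‖f u - f t‖ := real_inner_le_norm _ _
      have hn1 : ‖f u - fn n u‖ ≤ 2*C + 2 := by
        have := norm_sub_le (f u) (fn n u)
        have h2 := hC u huIcc
        have h3 := hbn u huab
        linarith
      have hn2 : ‖f u - f t‖ ≤ ε / (2 * (2*C + 2)) := by
        have := hmodf u huIcc t htIcc (Metric.mem_ball.1 huV)
        rw [dist_eq_norm] at this
        linarith
      calc (inner ℝ (f u - fn n u) (f u - f t) : ℝ)
          ≤ ‖f u - fn n u‖ * ‖f u - f t‖ := hle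
        _ ≤ (2*C + 2) * (ε / (2 * (2*C + 2))) := by
            apply mul_le_mul hn1 hn2 (norm_nonneg _) (by positivity)
        _ = ε/2 := by field_simp
    rw [hsplit]
    linarith
  -- Assemble
  rw [Metric.tendstoUniformlyOn_iff]
  intro ε hε
  filter_upwards [keyI (ε^2/2) (by positivity), keyII (ε^2/8) (by positivity)]
    with n h1 h2 t ht
  have hid : ‖f t - fn n t‖ ^ 2
      = (‖fn n t‖ ^ 2 - ‖f t‖ ^ 2) + 2 * inner ℝ (f t - fn n t) (f t) := by
    rw [norm_sub_sq_real, inner_sub_left, real_inner_self_eq_norm_sq,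
      real_inner_comm (f t) (fn n t)]
    ring
  have hlt : ‖f t - fn n t‖ ^ 2 < ε ^ 2 := by
    have := h1 t ht
    have := h2 t ht
    rw [hid]
    nlinarith
  rw [dist_eq_norm]
  exact lt_of_pow_lt_pow_left₀ 2 hε.le hlt
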